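/- Let n ≥ 1 and let m_1,…,m_n be positive integers, with the conventions m_0 = m_{n+1} = 0. If m_i > max(m_{i−1}, m_{i+1}) for some 1 ≤ i ≤ n, then N([m_n,…,m_1]) = N([m_n,…,m_{i+1}, m_i − |m_{i−1} − m_{i+1}|, m_{i−1},…,m_1]), i.e. the number of connected components of the up-and-down graph is unchanged when the entry m_i is replaced by m_i − |m_{i−1} − m_{i+1}|. -/

import Mathlib

/-- Vertices `e^(i)_j` of the up-and-down graph: pairs `(i, j)` with `0 ≤ i ≤ n`
and `1 ≤ j ≤ β i`. -/
def UDVert (n : ℕ) (β : ℕ → ℕ) : Type :=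
  {p : ℕ × ℕ // p.1 ≤ n ∧ 1 ≤ p.2 ∧ p.2 ≤ β p.1}

/-- The red edges of the up-and-down graph `Γ(β; r, s)`: for `1 ≤ i ≤ n`, if `n - i`
is even they join `e^(i)_j` to `e^(i-1)_j` for `1 ≤ j ≤ r i`, and if `n - i` is odd
they join `e^(i)_{β i + 1 - j}` to `e^(i-1)_{β (i-1) + 1 - j}` for `1 ≤ j ≤ r i`. -/
def RedAdj (n : ℕ) (β r : ℕ → ℕ) (p q : ℕ × ℕ) : Prop :=
  ∃ i j : ℕ, 1 ≤ i ∧ i ≤ n ∧ 1 ≤ j ∧ j ≤ r i ∧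
    ((Even (n - i) ∧
        ((p = (i, j) ∧ q = (i - 1, j)) ∨ (q = (i, j) ∧ p = (i - 1, j)))) ∨
      (¬ Even (n - i) ∧
        ((p = (i, β i + 1 - j) ∧ q = (i - 1, β (i - 1) + 1 - j)) ∨
          (q = (i, β i + 1 - j) ∧ p = (i - 1, β (i - 1) + 1 - j)))))

/-- The blue edges of the up-and-down graph `Γ(β; r, s)`: for `1 ≤ i ≤ n`, if `n - i`
is even they join `e^(i)_{β i + 1 - j}` to `e^(i-1)_{β (i-1) + 1 - j}` for `1 ≤ j ≤ s i`,
and if `n - i` is odd they join `e^(i)_j` to `e^(i-1)_j` for `1 ≤ j ≤ s i`. -/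
def BlueAdj (n : ℕ) (β s : ℕ → ℕ) (p q : ℕ × ℕ) : Prop :=
  ∃ i j : ℕ, 1 ≤ i ∧ i ≤ n ∧ 1 ≤ j ∧ j ≤ s i ∧
    ((¬ Even (n - i) ∧
        ((p = (i, j) ∧ q = (i - 1, j)) ∨ (q = (i, j) ∧ p = (i - 1, j)))) ∨
      (Even (n - i) ∧
        ((p = (i, β i + 1 - j) ∧ q = (i - 1, β (i - 1) + 1 - j)) ∨
          (q = (i, β i + 1 - j) ∧ p = (i - 1, β (i - 1) + 1 - j)))))

/-- The up-and-down graph `Γ(β; r, s)` (edges of both colors). -/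
def UDGraph (n : ℕ) (β r s : ℕ → ℕ) : SimpleGraph (UDVert n β) where
  Adj x y := x ≠ y ∧ (RedAdj n β r x.1 y.1 ∨ BlueAdj n β s x.1 y.1)
  symm := by
    refine ⟨?_⟩
    rintro x y ⟨hxy, h⟩
    refine ⟨hxy.symm, ?_⟩
    rcases h with ⟨i, j, h1, h2, h3, h4, h5⟩ | ⟨i, j, h1, h2, h3, h4, h5⟩
    · exact Or.inl ⟨i, j, h1, h2, h3, h4, by tauto⟩
    · exact Or.inr ⟨i, j, h1, h2, h3, h4, by tauto⟩
  loopless := by refine ⟨?_⟩; rintro x ⟨h, -⟩; exact h rfl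

/-- The sequence `m` extended by the conventions `m 0 = m (n+1) = 0` (entries outside
`1,…,n` are set to `0`). -/
def bandM (n : ℕ) (m : ℕ → ℕ) : ℕ → ℕ := fun i => if 1 ≤ i ∧ i ≤ n then m i else 0

/-- The band dimension vector `[m_n, …, m_1]`, i.e. `β i = m i + m (i+1)` with the
conventions `m 0 = m (n+1) = 0`. -/
def bandBeta (n : ℕ) (m : ℕ → ℕ) : ℕ → ℕ := fun i => bandM n m i + bandM n m (i + 1)

/-- The up-and-down graph `Γ([m_n, …, m_1])` of a band dimension vector:
`r = s = (m_1, …, m_n)`. -/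
def bandGraph (n : ℕ) (m : ℕ → ℕ) : SimpleGraph (UDVert n (bandBeta n m)) :=
  UDGraph n (bandBeta n m) (bandM n m) (bandM n m)

/-- `N([m_n, …, m_1])`: the number of connected components of `Γ([m_n, …, m_1])`. -/
noncomputable def NBand (n : ℕ) (m : ℕ → ℕ) : ℕ :=
  Nat.card (bandGraph n m).ConnectedComponent

set_option linter.unusedVariables false

-- PART 1: abstract lemma + adjacency API
open SimpleGraph

private lemma walk_reach {V W : Type} {G : SimpleGraph V} {H : SimpleGraph W} {F : V → W}
    (h1 : ∀ x y, G.Adj x y → H.Reachable (F x) (F y)) {v w : V} (p : G.Walk v w) :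
    H.Reachable (F v) (F w) := by
  induction p with
  | nil => exact Reachable.refl _
  | cons h _ ih => exact (h1 _ _ h).trans ih

private lemma card_cc_eq {V W : Type} (G : SimpleGraph V) (H : SimpleGraph W)
    (F : V → W) (G' : W → V)
    (h1 : ∀ x y, G.Adj x y → H.Reachable (F x) (F y))
    (h2 : ∀ x y, H.Adj x y → G.Reachable (G' x) (G' y))
    (h3 : ∀ x, G.Reachable x (G' (F x)))
    (h4 : ∀ y, H.Reachable y (F (G' y))) :
    Nat.card G.ConnectedComponent = Nat.card H.ConnectedComponent := by
  refine Nat.card_congr ?_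
  refine
    { toFun := ConnectedComponent.lift (fun v => H.connectedComponentMk (F v))
        (fun v w p _ => ConnectedComponent.sound (walk_reach h1 p))
      invFun := ConnectedComponent.lift (fun v => G.connectedComponentMk (G' v))
        (fun v w p _ => ConnectedComponent.sound (walk_reach h2 p))
      left_inv := ?_
      right_inv := ?_ }
  · refine ConnectedComponent.ind (fun v => ?_)
    exact ConnectedComponent.sound (h3 v).symm
  · refine ConnectedComponent.ind (fun v => ?_)
    exact ConnectedComponent.sound (h4 v).symm

/-- colorless adjacency: the left matching at step `l`. -/
private lemma band_adj_left (n : ℕ) (M : ℕ → ℕ) (l j : ℕ)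
    (hl1 : 1 ≤ l) (hl2 : l ≤ n) (hj1 : 1 ≤ j) (hj2 : j ≤ bandM n M l)
    (x y : UDVert n (bandBeta n M)) (hx : x.1 = (l, j)) (hy : y.1 = (l - 1, j)) :
    (bandGraph n M).Adj x y := by
  constructor
  · intro h; rw [h, hy] at hx; exact absurd (congrArg Prod.fst hx) (by simp; omega)
  · by_cases hp : Even (n - l)
    · exact Or.inl ⟨l, j, hl1, hl2, hj1, hj2, Or.inl ⟨hp, Or.inl ⟨hx, hy⟩⟩⟩
    · exact Or.inr ⟨l, j, hl1, hl2, hj1, hj2, Or.inl ⟨hp, Or.inl ⟨hx, hy⟩⟩⟩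

/-- colorless adjacency: the right matching at step `l`. -/
private lemma band_adj_right (n : ℕ) (M : ℕ → ℕ) (l j : ℕ)
    (hl1 : 1 ≤ l) (hl2 : l ≤ n) (hj1 : 1 ≤ j) (hj2 : j ≤ bandM n M l)
    (x y : UDVert n (bandBeta n M)) (hx : x.1 = (l, bandBeta n M l + 1 - j))
    (hy : y.1 = (l - 1, bandBeta n M (l - 1) + 1 - j)) :
    (bandGraph n M).Adj x y := by
  constructor
  · intro h; rw [h, hy] at hx; exact absurd (congrArg Prod.fst hx) (by simp; omega)
  · by_cases hp : Even (n - l)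
    · exact Or.inr ⟨l, j, hl1, hl2, hj1, hj2, Or.inr ⟨hp, Or.inl ⟨hx, hy⟩⟩⟩
    · exact Or.inl ⟨l, j, hl1, hl2, hj1, hj2, Or.inr ⟨hp, Or.inl ⟨hx, hy⟩⟩⟩

/-- destructor for band graph adjacency (colorless). -/
private lemma band_adj_elim {n : ℕ} {M : ℕ → ℕ} {x y : UDVert n (bandBeta n M)}
    (h : (bandGraph n M).Adj x y) :
    ∃ l j : ℕ, 1 ≤ l ∧ l ≤ n ∧ 1 ≤ j ∧ j ≤ bandM n M l ∧
      ((x.1 = (l, j) ∧ y.1 = (l - 1, j)) ∨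
        (y.1 = (l, j) ∧ x.1 = (l - 1, j)) ∨
        (x.1 = (l, bandBeta n M l + 1 - j) ∧ y.1 = (l - 1, bandBeta n M (l - 1) + 1 - j)) ∨
        (y.1 = (l, bandBeta n M l + 1 - j) ∧ x.1 = (l - 1, bandBeta n M (l - 1) + 1 - j))) := by
  obtain ⟨-, h | h⟩ := h <;> obtain ⟨l, j, h1, h2, h3, h4, h5⟩ := h <;>
    exact ⟨l, j, h1, h2, h3, h4, by tauto⟩

/-- `NBand` only depends on `bandM`. -/
private lemma NBand_congr {n : ℕ} {M₁ M₂ : ℕ → ℕ} (h : bandM n M₁ = bandM n M₂) :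
    NBand n M₁ = NBand n M₂ := by
  have : ∀ M : ℕ → ℕ, NBand n M =
      (fun μ : ℕ → ℕ =>
        Nat.card (UDGraph n (fun i => μ i + μ (i + 1)) μ μ).ConnectedComponent) (bandM n M) :=
    fun M => rfl
  rw [this, this, h]
-- PART 2: level reversal
open SimpleGraph

private lemma rev_beta {n : ℕ} {M₁ M₂ : ℕ → ℕ}
    (hM : ∀ x, bandM n M₂ x = bandM n M₁ (n + 1 - x)) {l : ℕ} (hl : l ≤ n) :
    bandBeta n M₂ (n - l) = bandBeta n M₁ l := by
  show bandM n M₂ (n - l) + bandM n M₂ (n - l + 1) = bandM n M₁ l + bandM n M₁ (l + 1)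
  rw [hM, hM]
  have h1 : n + 1 - (n - l) = l + 1 := by omega
  have h2 : n + 1 - (n - l + 1) = l := by omega
  rw [h1, h2, Nat.add_comm]

private def revF {n : ℕ} {M₁ M₂ : ℕ → ℕ}
    (hM : ∀ x, bandM n M₂ x = bandM n M₁ (n + 1 - x)) :
    UDVert n (bandBeta n M₁) → UDVert n (bandBeta n M₂) :=
  fun x => ⟨(n - x.1.1, x.1.2), by
    obtain ⟨h1, h2, h3⟩ := x.2
    exact ⟨by omega, h2, by rw [rev_beta hM h1]; exact h3⟩⟩

private lemma rev_adj {n : ℕ} {M₁ M₂ : ℕ → ℕ}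
    (hM : ∀ x, bandM n M₂ x = bandM n M₁ (n + 1 - x))
    (x y : UDVert n (bandBeta n M₁)) (h : (bandGraph n M₁).Adj x y) :
    (bandGraph n M₂).Adj (revF hM x) (revF hM y) := by
  obtain ⟨l, j, hl1, hl2, hj1, hj2, hc⟩ := band_adj_elim h
  have hM' : bandM n M₂ (n - l + 1) = bandM n M₁ l := by
    rw [hM]; congr 1; omega
  have hfx : (revF hM x).1 = (n - x.1.1, x.1.2) := rfl
  have hfy : (revF hM y).1 = (n - y.1.1, y.1.2) := rfl
  have hb1 : bandBeta n M₂ (n - l + 1) = bandBeta n M₁ (l - 1) := by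
    have := rev_beta hM (show l - 1 ≤ n by omega)
    rwa [show n - (l - 1) = n - l + 1 by omega] at this
  have hb2 : bandBeta n M₂ (n - l + 1 - 1) = bandBeta n M₁ l := by
    have := rev_beta hM hl2
    rwa [show n - l = n - l + 1 - 1 by omega] at this
  rcases hc with ⟨hx, hy⟩ | ⟨hy, hx⟩ | ⟨hx, hy⟩ | ⟨hy, hx⟩
  · refine (band_adj_left n M₂ (n - l + 1) j (by omega) (by omega) hj1 (by omega)
      (revF hM y) (revF hM x) ?_ ?_).symm
    · rw [hfy, hy]; simp only [Prod.mk.injEq]; exact ⟨by omega, trivial⟩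
    · rw [hfx, hx]; simp only [Prod.mk.injEq]; exact ⟨by omega, trivial⟩
  · refine band_adj_left n M₂ (n - l + 1) j (by omega) (by omega) hj1 (by omega)
      (revF hM x) (revF hM y) ?_ ?_
    · rw [hfx, hx]; simp only [Prod.mk.injEq]; exact ⟨by omega, trivial⟩
    · rw [hfy, hy]; simp only [Prod.mk.injEq]; exact ⟨by omega, trivial⟩
  · refine (band_adj_right n M₂ (n - l + 1) j (by omega) (by omega) hj1 (by omega)
      (revF hM y) (revF hM x) ?_ ?_).symm
    · rw [hfy, hy, hb1]; simp only [Prod.mk.injEq]; exact ⟨by omega, trivial⟩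
    · rw [hfx, hx, hb2]; simp only [Prod.mk.injEq]; exact ⟨by omega, trivial⟩
  · refine band_adj_right n M₂ (n - l + 1) j (by omega) (by omega) hj1 (by omega)
      (revF hM x) (revF hM y) ?_ ?_
    · rw [hfx, hx, hb1]; simp only [Prod.mk.injEq]; exact ⟨by omega, trivial⟩
    · rw [hfy, hy, hb2]; simp only [Prod.mk.injEq]; exact ⟨by omega, trivial⟩

private lemma NBand_rev (n : ℕ) (m : ℕ → ℕ) :
    NBand n m = NBand n (fun j => m (n + 1 - j)) := by
  set m' : ℕ → ℕ := fun j => m (n + 1 - j) with hm'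
  have hM1 : ∀ x, bandM n m' x = bandM n m (n + 1 - x) := by
    intro x; unfold bandM
    by_cases h : 1 ≤ x ∧ x ≤ n
    · rw [if_pos h, if_pos (by omega)]
    · rw [if_neg h, if_neg (by omega)]
  have hM2 : ∀ x, bandM n m x = bandM n m' (n + 1 - x) := by
    intro x; unfold bandM
    by_cases h : 1 ≤ x ∧ x ≤ n
    · rw [if_pos h, if_pos (by omega)]
      show m x = m (n + 1 - (n + 1 - x)); congr 1; omega
    · rw [if_neg h, if_neg (by omega)]
  refine card_cc_eq _ _ (revF hM1) (revF hM2)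
    (fun x y h => (rev_adj hM1 x y h).reachable)
    (fun x y h => (rev_adj hM2 x y h).reachable) (fun x => ?_) (fun y => ?_)
  · have : revF hM2 (revF hM1 x) = x := by
      apply Subtype.ext
      show (n - (n - x.1.1), x.1.2) = x.1
      have := x.2.1
      exact Prod.ext (by omega) rfl
    rw [this]
  · have : revF hM1 (revF hM2 y) = y := by
      apply Subtype.ext
      show (n - (n - y.1.1), y.1.2) = y.1
      have := y.2.1
      exact Prod.ext (by omega) rfl
    rw [this]
-- PART 3: the window-reduction function g and chain lemmas
open SimpleGraph

private def gfun (a c d x : ℕ) : ℕ := if x ≤ a then x else c + 1 + (x - a - 1) % d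

private lemma g_low {a c d x : ℕ} (h : x ≤ a) : gfun a c d x = x := if_pos h

private lemma g_high {a c d x : ℕ} (hd : a = c + d) (hd1 : 1 ≤ d) (h : a < x) :
    c + 1 ≤ gfun a c d x ∧ gfun a c d x ≤ a := by
  rw [gfun, if_neg (by omega)]
  have := Nat.mod_lt (x - a - 1) (show 0 < d by omega)
  omega

private lemma g_le_a {a c d x : ℕ} (hd : a = c + d) (hd1 : 1 ≤ d) :
    gfun a c d x ≤ max x a := by
  by_cases h : x ≤ a
  · rw [g_low h]; exact le_max_left _ _
  · exact le_trans (g_high hd hd1 (by omega)).2 (le_max_right _ _)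

private lemma g_le_a' {a c d x : ℕ} (hd : a = c + d) (hd1 : 1 ≤ d) :
    gfun a c d x ≤ a := by
  by_cases h : x ≤ a
  · rw [g_low h]; exact h
  · exact (g_high hd hd1 (by omega)).2

private lemma g_one {a c d x : ℕ} (h : 1 ≤ x) (hd : a = c + d) (hd1 : 1 ≤ d) :
    1 ≤ gfun a c d x := by
  by_cases h' : x ≤ a
  · rw [g_low h']; exact h
  · have := (g_high (x := x) hd hd1 (by omega)).1; omega

private lemma g_add {a c d x : ℕ} (hd : a = c + d) (hd1 : 1 ≤ d) (h : a < x + d) :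
    gfun a c d (x + d) = gfun a c d x := by
  have hx1 : ¬ (x + d ≤ a) := by omega
  unfold gfun
  rw [if_neg hx1]
  by_cases h' : x ≤ a
  · rw [if_pos h']
    have h1 : x + d - a - 1 = x - c - 1 := by omega
    have h2 : x - c - 1 < d := by omega
    rw [h1, Nat.mod_eq_of_lt h2]
    omega
  · rw [if_neg h']
    have h1 : x + d - a - 1 = (x - a - 1) + d := by omega
    rw [h1, Nat.add_mod_right]

section Chains

variable (n : ℕ) (M : ℕ → ℕ) (i a B c d : ℕ)

private lemma beta_i (hi1 : 1 ≤ i) (hB : bandM n M i = B) (hc : bandM n M (i + 1) = c) :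
    bandBeta n M i = B + c := by
  show bandM n M i + bandM n M (i + 1) = B + c
  rw [hB, hc]

private lemma beta_im (hi1 : 1 ≤ i) (ha : bandM n M (i - 1) = a) (hB : bandM n M i = B) :
    bandBeta n M (i - 1) = a + B := by
  show bandM n M (i - 1) + bandM n M (i - 1 + 1) = a + B
  rw [show i - 1 + 1 = i by omega, ha, hB]

variable (hi1 : 1 ≤ i) (hi2 : i ≤ n) (ha : bandM n M (i - 1) = a)
  (hB : bandM n M i = B) (hc : bandM n M (i + 1) = c) (hd : a = c + d) (hd1 : 1 ≤ d)

include hi1 hi2 ha hB hc hd hd1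

private lemma chainL1 (k : ℕ) (hk1 : 1 ≤ k) (hk2 : c + k ≤ B)
    (x y : UDVert n (bandBeta n M)) (hx : x.1 = (i - 1, a + k)) (hy : y.1 = (i - 1, c + k)) :
    (bandGraph n M).Reachable x y := by
  have hbi := beta_i n M i B c hi1 hB hc
  have hbim := beta_im n M i a B hi1 ha hB
  have hmid : i ≤ n ∧ 1 ≤ c + k ∧ c + k ≤ bandBeta n M i := ⟨hi2, by omega, by omega⟩
  set mid : UDVert n (bandBeta n M) := ⟨(i, c + k), hmid⟩ with hmdef
  have hmid1 : mid.1 = (i, c + k) := rfl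
  have adj1 : (bandGraph n M).Adj mid x := by
    refine band_adj_right n M i (B + 1 - k) hi1 hi2 (by omega) (by omega) mid x ?_ ?_
    · rw [hmid1]; exact Prod.ext rfl (by simp; omega)
    · rw [hx]; exact Prod.ext rfl (by simp; omega)
  have adj2 : (bandGraph n M).Adj mid y :=
    band_adj_left n M i (c + k) hi1 hi2 (by omega) (by omega) mid y hmid1 hy
  exact (adj1.symm.reachable).trans adj2.reachable

private lemma chainL2 : ∀ p, 1 ≤ p → p ≤ B + d → p ≤ a + B →
    ∀ x y : UDVert n (bandBeta n M), x.1 = (i - 1, p) → y.1 = (i - 1, gfun a c d p) →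
    (bandGraph n M).Reachable x y := by
  intro p
  induction p using Nat.strong_induction_on with
  | _ p ih =>
    intro hp1 hp2 hp3 x y hx hy
    by_cases hpa : p ≤ a
    · rw [g_low hpa] at hy
      exact Reachable.refl _ |>.mono le_rfl |>.trans (by rw [Subtype.ext (hx.trans hy.symm)])
    · have hbim := beta_im n M i a B hi1 ha hB
      have hmid : i - 1 ≤ n ∧ 1 ≤ p - d ∧ p - d ≤ bandBeta n M (i - 1) :=
        ⟨by omega, by omega, by omega⟩
      set mid : UDVert n (bandBeta n M) := ⟨(i - 1, p - d), hmid⟩ with hmdef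
      have step : (bandGraph n M).Reachable x mid := by
        refine chainL1 n M i a B c d hi1 hi2 ha hB hc hd hd1 (p - a) (by omega) (by omega)
          x mid ?_ ?_
        · rw [hx]; exact Prod.ext rfl (by simp; omega)
        · exact Prod.ext rfl (by show p - d = c + (p - a); omega)
      have rest : (bandGraph n M).Reachable mid y := by
        refine ih (p - d) (by omega) (by omega) (by omega) (by omega) mid y rfl ?_
        rw [hy]
        have : gfun a c d (p - d + d) = gfun a c d (p - d) := g_add hd hd1 (by omega)
        rw [show p - d + d = p by omega] at this
        rw [this]
      exact step.trans rest

end Chains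
-- PART 4: the collapsing maps on raw pairs
private def FrF (i a c d bnd : ℕ) : ℕ × ℕ → ℕ × ℕ := fun p =>
  if p.1 = i - 1 ∨ p.1 = i then
    (if bnd < p.2 then (p.1, p.2 - d) else (i - 1, gfun a c d p.2)) else p

private def FrG (i a c d bnd : ℕ) : ℕ × ℕ → ℕ × ℕ := fun p =>
  if p.1 = i - 1 ∨ p.1 = i then
    (if bnd < p.2 then (p.1, p.2 + d) else (i - 1, gfun a c d p.2)) else p

private lemma FrF_out {i a c d bnd l p : ℕ} (h : ¬ (l = i - 1 ∨ l = i)) :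
    FrF i a c d bnd (l, p) = (l, p) := by simp [FrF, h]

private lemma FrF_high {i a c d bnd l p : ℕ} (h : l = i - 1 ∨ l = i) (h2 : bnd < p) :
    FrF i a c d bnd (l, p) = (l, p - d) := by simp [FrF, h, h2]

private lemma FrF_low {i a c d bnd l p : ℕ} (h : l = i - 1 ∨ l = i) (h2 : p ≤ bnd) :
    FrF i a c d bnd (l, p) = (i - 1, gfun a c d p) := by
  simp [FrF, h]; intro h'; omega

private lemma FrG_out {i a c d bnd l p : ℕ} (h : ¬ (l = i - 1 ∨ l = i)) :
    FrG i a c d bnd (l, p) = (l, p) := by simp [FrG, h]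

private lemma FrG_high {i a c d bnd l p : ℕ} (h : l = i - 1 ∨ l = i) (h2 : bnd < p) :
    FrG i a c d bnd (l, p) = (l, p + d) := by simp [FrG, h, h2]

private lemma FrG_low {i a c d bnd l p : ℕ} (h : l = i - 1 ∨ l = i) (h2 : p ≤ bnd) :
    FrG i a c d bnd (l, p) = (i - 1, gfun a c d p) := by
  simp [FrG, h]; intro h'; omega
-- PART 5: the main surgery lemma (case a > c)
open SimpleGraph

set_option maxHeartbeats 3200000 in
private lemma caseA (n : ℕ) (m : ℕ → ℕ) (i a b c d b' : ℕ)
    (hi1 : 1 ≤ i) (hi2 : i ≤ n)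
    (ha : bandM n m (i - 1) = a) (hb : bandM n m i = b) (hc : bandM n m (i + 1) = c)
    (hca : c < a) (hab : a < b) (hd : d = a - c) (hbb' : b' = b - d) :
    NBand n m = NBand n (fun j => if j = i then b' else m j) := by
  set m' : ℕ → ℕ := fun j => if j = i then b' else m j with hm'def
  have hdca : a = c + d := by omega
  have hd1 : 1 ≤ d := by omega
  have hbd : b = b' + d := by omega
  have hcb' : c < b' := by omega
  have hm'i : bandM n m' i = b' := by
    unfold bandM; rw [if_pos ⟨hi1, hi2⟩]; simp [hm'def]
  have hm'o : ∀ j, j ≠ i → bandM n m' j = bandM n m j := by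
    intro j hj; unfold bandM
    by_cases h : 1 ≤ j ∧ j ≤ n
    · rw [if_pos h, if_pos h]; simp [hm'def, hj]
    · rw [if_neg h, if_neg h]
  have ha' : bandM n m' (i - 1) = a := by rw [hm'o _ (by omega), ha]
  have hc' : bandM n m' (i + 1) = c := by rw [hm'o _ (by omega), hc]
  have hβi : bandBeta n m i = b + c := beta_i n m i b c hi1 hb hc
  have hβim : bandBeta n m (i - 1) = a + b := beta_im n m i a b hi1 ha hb
  have hβ'i : bandBeta n m' i = b' + c := beta_i n m' i b' c hi1 hm'i hc'
  have hβ'im : bandBeta n m' (i - 1) = a + b' := beta_im n m' i a b' hi1 ha' hm'i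
  have hgle : ∀ p, gfun a c d p ≤ a := fun p => g_le_a' hdca hd1
  have hβout : ∀ l, ¬ (l = i - 1 ∨ l = i) → bandBeta n m' l = bandBeta n m l := by
    intro l hl
    show bandM n m' l + bandM n m' (l + 1) = bandM n m l + bandM n m (l + 1)
    rw [hm'o l (by omega), hm'o (l + 1) (by omega)]
  -- validity of the maps
  have hFval : ∀ l p, l ≤ n → 1 ≤ p → p ≤ bandBeta n m l →
      (FrF i a c d b (l, p)).1 ≤ n ∧ 1 ≤ (FrF i a c d b (l, p)).2 ∧
        (FrF i a c d b (l, p)).2 ≤ bandBeta n m' (FrF i a c d b (l, p)).1 := by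
    intro l p hl hp1 hp2
    by_cases hli : l = i - 1 ∨ l = i
    · by_cases hbp : b < p
      · rw [FrF_high hli hbp]
        refine ⟨hl, by omega, ?_⟩
        show p - d ≤ bandBeta n m' l
        rcases hli with h | h <;> subst h
        · rw [hβ'im]; rw [hβim] at hp2; omega
        · rw [hβ'i]; rw [hβi] at hp2; omega
      · rw [FrF_low hli (by omega)]
        refine ⟨by omega, g_one hp1 hdca hd1, ?_⟩
        show gfun a c d p ≤ bandBeta n m' (i - 1)
        have := hgle p
        rw [hβ'im]; omega
    · rw [FrF_out hli]
      exact ⟨hl, hp1, by rw [hβout l hli]; exact hp2⟩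
  have hGval : ∀ l p, l ≤ n → 1 ≤ p → p ≤ bandBeta n m' l →
      (FrG i a c d b' (l, p)).1 ≤ n ∧ 1 ≤ (FrG i a c d b' (l, p)).2 ∧
        (FrG i a c d b' (l, p)).2 ≤ bandBeta n m (FrG i a c d b' (l, p)).1 := by
    intro l p hl hp1 hp2
    by_cases hli : l = i - 1 ∨ l = i
    · by_cases hbp : b' < p
      · rw [FrG_high hli hbp]
        refine ⟨hl, by omega, ?_⟩
        show p + d ≤ bandBeta n m l
        rcases hli with h | h <;> subst h
        · rw [hβim]; rw [hβ'im] at hp2; omega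
        · rw [hβi]; rw [hβ'i] at hp2; omega
      · rw [FrG_low hli (by omega)]
        refine ⟨by omega, g_one hp1 hdca hd1, ?_⟩
        show gfun a c d p ≤ bandBeta n m (i - 1)
        have := hgle p
        rw [hβim]; omega
    · rw [FrG_out hli]
      exact ⟨hl, hp1, by rw [← hβout l hli]; exact hp2⟩
  set F : UDVert n (bandBeta n m) → UDVert n (bandBeta n m') :=
    fun x => ⟨FrF i a c d b x.1, hFval x.1.1 x.1.2 x.2.1 x.2.2.1 x.2.2.2⟩ with hFdef
  set G : UDVert n (bandBeta n m') → UDVert n (bandBeta n m) :=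
    fun y => ⟨FrG i a c d b' y.1, hGval y.1.1 y.1.2 y.2.1 y.2.2.1 y.2.2.2⟩ with hGdef
  have hF1 : ∀ x, (F x).1 = FrF i a c d b x.1 := fun _ => rfl
  have hG1 : ∀ y, (G y).1 = FrG i a c d b' y.1 := fun _ => rfl
  -- generic chain reachability to the g-window
  have reach_core : ∀ (M : ℕ → ℕ) (B : ℕ), bandM n M (i - 1) = a → bandM n M i = B →
      bandM n M (i + 1) = c → ∀ (x w : UDVert n (bandBeta n M)) (l p : ℕ),
      x.1 = (l, p) → (l = i - 1 ∨ l = i) → 1 ≤ p → p ≤ B →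
      w.1 = (i - 1, gfun a c d p) → (bandGraph n M).Reachable x w := by
    intro M B hMa hMB hMc x w l p hx hli hp1 hp2 hw
    rcases hli with h | h <;> rw [h] at hx
    · exact chainL2 n M i a B c d hi1 hi2 hMa hMB hMc hdca hd1 p hp1 (by omega) (by omega)
        x w hx hw
    · have hmidval : i - 1 ≤ n ∧ 1 ≤ p ∧ p ≤ bandBeta n M (i - 1) := by
        rw [beta_im n M i a B hi1 hMa hMB]; exact ⟨by omega, hp1, by omega⟩
      set mid : UDVert n (bandBeta n M) := ⟨(i - 1, p), hmidval⟩ with hmiddef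
      have adj : (bandGraph n M).Adj x mid :=
        band_adj_left n M i p hi1 hi2 hp1 (by omega) x mid hx rfl
      exact adj.reachable.trans
        (chainL2 n M i a B c d hi1 hi2 hMa hMB hMc hdca hd1 p hp1 (by omega) (by omega)
          mid w rfl hw)
  -- h3 : x is reachable from G (F x)
  have h3 : ∀ x, (bandGraph n m).Reachable x (G (F x)) := by
    intro x
    set l := x.1.1 with hldef
    set p := x.1.2 with hpdef
    have hx1 : x.1 = (l, p) := rfl
    have hlv : l ≤ n := x.2.1
    have hp1v : 1 ≤ p := x.2.2.1
    have hp2v : p ≤ bandBeta n m l := x.2.2.2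
    by_cases hli : l = i - 1 ∨ l = i
    · by_cases hbp : b < p
      · have e1 : (F x).1 = (l, p - d) := by rw [hF1, hx1, FrF_high hli hbp]
        have e2 : (G (F x)).1 = (l, p) := by
          rw [hG1, e1, FrG_high hli (by omega)]
          exact Prod.ext rfl (by simp; omega)
        exact (Subtype.ext (hx1.trans e2.symm) : x = G (F x)) ▸ Reachable.refl x
      · have e1 : (F x).1 = (i - 1, gfun a c d p) := by rw [hF1, hx1, FrF_low hli (by omega)]
        have hgpa : gfun a c d p ≤ a := by have := hgle p; omega
        by_cases hgb : gfun a c d p ≤ b'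
        · have e2 : (G (F x)).1 = (i - 1, gfun a c d p) := by
            rw [hG1, e1, FrG_low (Or.inl rfl) hgb, g_low hgpa]
          exact reach_core m b ha hb hc x (G (F x)) l p hx1 hli (by omega) (by omega) e2
        · have e2 : (G (F x)).1 = (i - 1, gfun a c d p + d) := by
            rw [hG1, e1, FrG_high (Or.inl rfl) (by omega)]
          have hgg : gfun a c d (gfun a c d p + d) = gfun a c d p := by
            rw [g_add hdca hd1 (by omega)]; exact g_low hgpa
          have hmid2v : i - 1 ≤ n ∧ 1 ≤ gfun a c d p ∧
              gfun a c d p ≤ bandBeta n m (i - 1) := by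
            rw [hβim]; exact ⟨by omega, g_one hp1v hdca hd1, by omega⟩
          set mid2 : UDVert n (bandBeta n m) := ⟨(i - 1, gfun a c d p), hmid2v⟩
          have r1 : (bandGraph n m).Reachable x mid2 :=
            reach_core m b ha hb hc x mid2 l p hx1 hli (by omega) (by omega) rfl
          have r2 : (bandGraph n m).Reachable (G (F x)) mid2 := by
            refine chainL2 n m i a b c d hi1 hi2 ha hb hc hdca hd1 (gfun a c d p + d)
              (by omega) (by omega) (by omega) (G (F x)) mid2 e2 ?_
            rw [hgg]
          exact r1.trans r2.symm
    · have e2 : (G (F x)).1 = (l, p) := by rw [hG1, hF1, hx1, FrF_out hli, FrG_out hli]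
      exact (Subtype.ext (hx1.trans e2.symm) : x = G (F x)) ▸ Reachable.refl x
  -- h4 : y is reachable from F (G y)
  have h4 : ∀ y, (bandGraph n m').Reachable y (F (G y)) := by
    intro y
    set l := y.1.1 with hldef
    set p := y.1.2 with hpdef
    have hy1 : y.1 = (l, p) := rfl
    have hlv : l ≤ n := y.2.1
    have hp1v : 1 ≤ p := y.2.2.1
    have hp2v : p ≤ bandBeta n m' l := y.2.2.2
    by_cases hli : l = i - 1 ∨ l = i
    · by_cases hbp : b' < p
      · have e1 : (G y).1 = (l, p + d) := by rw [hG1, hy1, FrG_high hli hbp]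
        have e2 : (F (G y)).1 = (l, p) := by
          rw [hF1, e1, FrF_high hli (by omega)]
          exact Prod.ext rfl (by simp)
        exact (Subtype.ext (hy1.trans e2.symm) : y = F (G y)) ▸ Reachable.refl y
      · have e1 : (G y).1 = (i - 1, gfun a c d p) := by rw [hG1, hy1, FrG_low hli (by omega)]
        have hgpa : gfun a c d p ≤ a := by have := hgle p; omega
        have e2 : (F (G y)).1 = (i - 1, gfun a c d p) := by
          rw [hF1, e1, FrF_low (Or.inl rfl) (by omega), g_low hgpa]
        exact reach_core m' b' ha' hm'i hc' y (F (G y)) l p hy1 hli (by omega) (by omega) e2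
    · have e2 : (F (G y)).1 = (l, p) := by rw [hF1, hG1, hy1, FrG_out hli, FrF_out hli]
      exact (Subtype.ext (hy1.trans e2.symm) : y = F (G y)) ▸ Reachable.refl y
  -- h1 : edges of the big graph map to reachability in the small graph
  have h1 : ∀ x y, (bandGraph n m).Adj x y → (bandGraph n m').Reachable (F x) (F y) := by
    have key_left : ∀ (l j : ℕ), 1 ≤ l → l ≤ n → 1 ≤ j → j ≤ bandM n m l →
        ∀ x y, x.1 = (l, j) → y.1 = (l - 1, j) →
        (bandGraph n m').Reachable (F x) (F y) := by
      intro l j hl1 hl2 hj1 hj2 x y hx hy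
      by_cases hl : l = i
      · rw [hl] at hj2 hx hy
        have ex : (F x).1 = (i - 1, gfun a c d j) := by
          rw [hF1, hx, FrF_low (Or.inr rfl) (by omega : j ≤ b)]
        have ey : (F y).1 = (i - 1, gfun a c d j) := by
          rw [hF1, hy, FrF_low (Or.inl rfl) (by rw [hb] at hj2; omega)]
        exact (Subtype.ext (ex.trans ey.symm) : F x = F y) ▸ Reachable.refl (F x)
      · by_cases hl' : l = i - 1
        · rw [hl'] at hl1 hl2 hj2 hx hy
          rw [ha] at hj2
          have hi2' : 2 ≤ i := by omega
          have ex : (F x).1 = (i - 1, j) := by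
            rw [hF1, hx, FrF_low (Or.inl rfl) (by omega), g_low (by omega)]
          have ey : (F y).1 = (i - 1 - 1, j) := by
            rw [hF1, hy, FrF_out (by omega)]
          exact (band_adj_left n m' (i - 1) j hl1 hl2 hj1 (by rw [ha']; omega)
            (F x) (F y) ex ey).reachable
        · by_cases hl'' : l = i + 1
          · rw [hl''] at hl2 hj2 hx hy
            rw [hc] at hj2
            have ex : (F x).1 = (i + 1, j) := by
              rw [hF1, hx, FrF_out (by omega)]
            have ey : (F y).1 = (i - 1, j) := by
              rw [hF1, hy]
              rw [show i + 1 - 1 = i by omega]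
              rw [FrF_low (Or.inr rfl) (by omega), g_low (by omega)]
            have hmidv : i ≤ n ∧ 1 ≤ j ∧ j ≤ bandBeta n m' i := by
              rw [hβ'i]; exact ⟨hi2, hj1, by omega⟩
            set mid : UDVert n (bandBeta n m') := ⟨(i, j), hmidv⟩
            have a1 : (bandGraph n m').Adj (F x) mid := by
              refine band_adj_left n m' (i + 1) j (by omega) hl2 hj1
                (by rw [hc']; omega) (F x) mid ex ?_
              exact Prod.ext (by show i = i + 1 - 1; omega) rfl
            have a2 : (bandGraph n m').Adj mid (F y) :=
              band_adj_left n m' i j hi1 hi2 hj1 (by rw [hm'i]; omega) mid (F y) rfl ey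
            exact a1.reachable.trans a2.reachable
          · have hlx : ¬ (l = i - 1 ∨ l = i) := by omega
            have hly : ¬ (l - 1 = i - 1 ∨ l - 1 = i) := by omega
            have ex : (F x).1 = (l, j) := by rw [hF1, hx, FrF_out hlx]
            have ey : (F y).1 = (l - 1, j) := by rw [hF1, hy, FrF_out hly]
            exact (band_adj_left n m' l j hl1 hl2 hj1
              (by rw [hm'o l hl]; omega) (F x) (F y) ex ey).reachable
    have key_right : ∀ (l j : ℕ), 1 ≤ l → l ≤ n → 1 ≤ j → j ≤ bandM n m l →
        ∀ x y, x.1 = (l, bandBeta n m l + 1 - j) →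
        y.1 = (l - 1, bandBeta n m (l - 1) + 1 - j) →
        (bandGraph n m').Reachable (F x) (F y) := by
      intro l j hl1 hl2 hj1 hj2 x y hx hy
      by_cases hl : l = i
      · rw [hl] at hj2 hx hy
        rw [hb] at hj2
        rw [hβi] at hx
        rw [hβim] at hy
        by_cases hjc : j ≤ c
        · have ex : (F x).1 = (i, b' + c + 1 - j) := by
            rw [hF1, hx, FrF_high (Or.inr rfl) (by omega)]
            exact Prod.ext rfl (by simp; omega)
          have ey : (F y).1 = (i - 1, a + b' + 1 - j) := by
            rw [hF1, hy, FrF_high (Or.inl rfl) (by omega)]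
            exact Prod.ext rfl (by simp; omega)
          refine (band_adj_right n m' i j hi1 hi2 hj1 (by rw [hm'i]; omega)
            (F x) (F y) ?_ ?_).reachable
          · rw [ex, hβ'i]
          · rw [ey, hβ'im]
        · by_cases hja : j ≤ a
          · -- c < j ≤ a : chain in the small graph
            set q : ℕ := b + c + 1 - j with hqdef
            have hq1 : 1 ≤ q := by omega
            have hqb : q ≤ b := by omega
            have ex : (F x).1 = (i - 1, gfun a c d q) := by
              rw [hF1, hx, FrF_low (Or.inr rfl) (by omega)]
            have ey : (F y).1 = (i - 1, q) := by
              rw [hF1, hy, FrF_high (Or.inl rfl) (by omega)]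
              exact Prod.ext rfl (by simp; omega)
            exact (chainL2 n m' i a b' c d hi1 hi2 ha' hm'i hc' hdca hd1 q hq1
              (by omega) (by omega) (F y) (F x) ey ex).symm
          · -- a < j ≤ b
            set q : ℕ := b + c + 1 - j with hqdef
            have hq1 : 1 ≤ q := by omega
            have hpq : a + b + 1 - j = q + d := by omega
            have ex : (F x).1 = (i - 1, gfun a c d q) := by
              rw [hF1, hx, FrF_low (Or.inr rfl) (by omega)]
            have ey : (F y).1 = (i - 1, gfun a c d q) := by
              rw [hF1, hy, FrF_low (Or.inl rfl) (by omega), hpq,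
                g_add hdca hd1 (by omega)]
            exact (Subtype.ext (ex.trans ey.symm) : F x = F y) ▸ Reachable.refl (F x)
      · by_cases hl' : l = i - 1
        · rw [hl'] at hl1 hl2 hj2 hx hy
          rw [ha] at hj2
          have hi2' : 2 ≤ i := by omega
          rw [hβim] at hx
          have ex : (F x).1 = (i - 1, a + b' + 1 - j) := by
            rw [hF1, hx, FrF_high (Or.inl rfl) (by omega)]
            exact Prod.ext rfl (by simp; omega)
          have ey : (F y).1 = (i - 1 - 1, bandBeta n m (i - 1 - 1) + 1 - j) := by
            rw [hF1, hy, FrF_out (by omega)]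
          refine (band_adj_right n m' (i - 1) j hl1 hl2 hj1 (by rw [ha']; omega)
            (F x) (F y) ?_ ?_).reachable
          · rw [ex, hβ'im]
          · rw [ey, hβout _ (by omega)]
        · by_cases hl'' : l = i + 1
          · rw [hl''] at hl2 hj2 hx hy
            rw [hc] at hj2
            rw [show i + 1 - 1 = i by omega, hβi] at hy
            have ex : (F x).1 = (i + 1, bandBeta n m (i + 1) + 1 - j) := by
              rw [hF1, hx, FrF_out (by omega)]
            have ey : (F y).1 = (i, b' + c + 1 - j) := by
              rw [hF1, hy, FrF_high (Or.inr rfl) (by omega)]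
              exact Prod.ext rfl (by simp; omega)
            refine (band_adj_right n m' (i + 1) j (by omega) hl2 hj1
              (by rw [hc']; omega) (F x) (F y) ?_ ?_).reachable
            · rw [ex, hβout _ (by omega)]
            · rw [ey, show i + 1 - 1 = i by omega, hβ'i]
          · have hlx : ¬ (l = i - 1 ∨ l = i) := by omega
            have hly : ¬ (l - 1 = i - 1 ∨ l - 1 = i) := by omega
            have ex : (F x).1 = (l, bandBeta n m l + 1 - j) := by
              rw [hF1, hx, FrF_out hlx]
            have ey : (F y).1 = (l - 1, bandBeta n m (l - 1) + 1 - j) := by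
              rw [hF1, hy, FrF_out hly]
            refine (band_adj_right n m' l j hl1 hl2 hj1
              (by rw [hm'o l hl]; omega) (F x) (F y) ?_ ?_).reachable
            · rw [ex, hβout _ hlx]
            · rw [ey, hβout _ hly]
    intro x y hadj
    obtain ⟨l, j, hl1, hl2, hj1, hj2, hcase⟩ := band_adj_elim hadj
    rcases hcase with ⟨hx, hy⟩ | ⟨hy, hx⟩ | ⟨hx, hy⟩ | ⟨hy, hx⟩
    · exact key_left l j hl1 hl2 hj1 hj2 x y hx hy
    · exact (key_left l j hl1 hl2 hj1 hj2 y x hy hx).symm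
    · exact key_right l j hl1 hl2 hj1 hj2 x y hx hy
    · exact (key_right l j hl1 hl2 hj1 hj2 y x hy hx).symm
  -- h2 : edges of the small graph map to reachability in the big graph
  have h2 : ∀ x y, (bandGraph n m').Adj x y → (bandGraph n m).Reachable (G x) (G y) := by
    have key_left : ∀ (l j : ℕ), 1 ≤ l → l ≤ n → 1 ≤ j → j ≤ bandM n m' l →
        ∀ x y, x.1 = (l, j) → y.1 = (l - 1, j) →
        (bandGraph n m).Reachable (G x) (G y) := by
      intro l j hl1 hl2 hj1 hj2 x y hx hy
      by_cases hl : l = i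
      · rw [hl] at hj2 hx hy
        rw [hm'i] at hj2
        have ex : (G x).1 = (i - 1, gfun a c d j) := by
          rw [hG1, hx, FrG_low (Or.inr rfl) (by omega)]
        have ey : (G y).1 = (i - 1, gfun a c d j) := by
          rw [hG1, hy, FrG_low (Or.inl rfl) (by omega)]
        exact (Subtype.ext (ex.trans ey.symm) : G x = G y) ▸ Reachable.refl (G x)
      · by_cases hl' : l = i - 1
        · rw [hl'] at hl1 hl2 hj2 hx hy
          rw [ha'] at hj2
          have hi2' : 2 ≤ i := by omega
          have ey : (G y).1 = (i - 1 - 1, j) := by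
            rw [hG1, hy, FrG_out (by omega)]
          by_cases hjb : j ≤ b'
          · have ex : (G x).1 = (i - 1, j) := by
              rw [hG1, hx, FrG_low (Or.inl rfl) hjb, g_low (by omega)]
            exact (band_adj_left n m (i - 1) j hl1 hl2 hj1 (by rw [ha]; omega)
              (G x) (G y) ex ey).reachable
          · -- b' < j ≤ a : need the chain in the big graph
            have ex : (G x).1 = (i - 1, j + d) := by
              rw [hG1, hx, FrG_high (Or.inl rfl) (by omega)]
            have hmidv : i - 1 ≤ n ∧ 1 ≤ j ∧ j ≤ bandBeta n m (i - 1) := by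
              rw [hβim]; exact ⟨by omega, hj1, by omega⟩
            set mid : UDVert n (bandBeta n m) := ⟨(i - 1, j), hmidv⟩
            have r1 : (bandGraph n m).Reachable (G x) mid := by
              refine chainL2 n m i a b c d hi1 hi2 ha hb hc hdca hd1 (j + d)
                (by omega) (by omega) (by omega) (G x) mid ex ?_
              have : gfun a c d (j + d) = gfun a c d j := g_add hdca hd1 (by omega)
              rw [this, g_low (by omega)]
            have a2 : (bandGraph n m).Adj mid (G y) :=
              band_adj_left n m (i - 1) j hl1 hl2 hj1 (by rw [ha]; omega) mid (G y) rfl ey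
            exact r1.trans a2.reachable
        · by_cases hl'' : l = i + 1
          · rw [hl''] at hl2 hj2 hx hy
            rw [hm'o _ (by omega), hc] at hj2
            have ex : (G x).1 = (i + 1, j) := by
              rw [hG1, hx, FrG_out (by omega)]
            have ey : (G y).1 = (i - 1, j) := by
              rw [hG1, hy, show i + 1 - 1 = i by omega,
                FrG_low (Or.inr rfl) (by omega), g_low (by omega)]
            have hmidv : i ≤ n ∧ 1 ≤ j ∧ j ≤ bandBeta n m i := by
              rw [hβi]; exact ⟨hi2, hj1, by omega⟩
            set mid : UDVert n (bandBeta n m) := ⟨(i, j), hmidv⟩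
            have a1 : (bandGraph n m).Adj (G x) mid := by
              refine band_adj_left n m (i + 1) j (by omega) hl2 hj1
                (by rw [hc]; omega) (G x) mid ex ?_
              exact Prod.ext (by show i = i + 1 - 1; omega) rfl
            have a2 : (bandGraph n m).Adj mid (G y) :=
              band_adj_left n m i j hi1 hi2 hj1 (by rw [hb]; omega) mid (G y) rfl ey
            exact a1.reachable.trans a2.reachable
          · have hlx : ¬ (l = i - 1 ∨ l = i) := by omega
            have hly : ¬ (l - 1 = i - 1 ∨ l - 1 = i) := by omega
            have ex : (G x).1 = (l, j) := by rw [hG1, hx, FrG_out hlx]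
            have ey : (G y).1 = (l - 1, j) := by rw [hG1, hy, FrG_out hly]
            exact (band_adj_left n m l j hl1 hl2 hj1
              (by rw [← hm'o l hl]; omega) (G x) (G y) ex ey).reachable
    have key_right : ∀ (l j : ℕ), 1 ≤ l → l ≤ n → 1 ≤ j → j ≤ bandM n m' l →
        ∀ x y, x.1 = (l, bandBeta n m' l + 1 - j) →
        y.1 = (l - 1, bandBeta n m' (l - 1) + 1 - j) →
        (bandGraph n m).Reachable (G x) (G y) := by
      intro l j hl1 hl2 hj1 hj2 x y hx hy
      by_cases hl : l = i
      · rw [hl] at hj2 hx hy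
        rw [hm'i] at hj2
        rw [hβ'i] at hx
        rw [hβ'im] at hy
        by_cases hjc : j ≤ c
        · have ex : (G x).1 = (i, b + c + 1 - j) := by
            rw [hG1, hx, FrG_high (Or.inr rfl) (by omega)]
            exact Prod.ext rfl (by simp; omega)
          have ey : (G y).1 = (i - 1, a + b + 1 - j) := by
            rw [hG1, hy, FrG_high (Or.inl rfl) (by omega)]
            exact Prod.ext rfl (by simp; omega)
          refine (band_adj_right n m i j hi1 hi2 hj1 (by rw [hb]; omega)
            (G x) (G y) ?_ ?_).reachable
          · rw [ex, hβi]
          · rw [ey, hβim]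
        · by_cases hja : j ≤ a
          · -- c < j ≤ min a b' : chain in the big graph
            set q : ℕ := b' + c + 1 - j with hqdef
            have hq1 : 1 ≤ q := by omega
            have hqb : q ≤ b' := by omega
            have hqc : c < q := by omega
            have ex : (G x).1 = (i - 1, gfun a c d q) := by
              rw [hG1, hx, FrG_low (Or.inr rfl) (by omega)]
            have ey : (G y).1 = (i - 1, q + 2 * d) := by
              rw [hG1, hy, FrG_high (Or.inl rfl) (by omega)]
              exact Prod.ext rfl (by simp; omega)
            have hg2 : gfun a c d (q + 2 * d) = gfun a c d q := by
              have e1 : q + 2 * d = (q + d) + d := by omega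
              rw [e1, g_add hdca hd1 (by omega), g_add hdca hd1 (by omega)]
            refine ((chainL2 n m i a b c d hi1 hi2 ha hb hc hdca hd1 (q + 2 * d)
              (by omega) (by omega) (by omega) (G y) (G x) ey ?_)).symm
            rw [ex, hg2]
          · -- a < j ≤ b'
            set q : ℕ := b' + c + 1 - j with hqdef
            have hq1 : 1 ≤ q := by omega
            have hpq : a + b' + 1 - j = q + d := by omega
            have ex : (G x).1 = (i - 1, gfun a c d q) := by
              rw [hG1, hx, FrG_low (Or.inr rfl) (by omega)]
            have ey : (G y).1 = (i - 1, gfun a c d q) := by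
              rw [hG1, hy, FrG_low (Or.inl rfl) (by omega), hpq,
                g_add hdca hd1 (by omega)]
            exact (Subtype.ext (ex.trans ey.symm) : G x = G y) ▸ Reachable.refl (G x)
      · by_cases hl' : l = i - 1
        · rw [hl'] at hl1 hl2 hj2 hx hy
          rw [ha'] at hj2
          have hi2' : 2 ≤ i := by omega
          rw [hβ'im] at hx
          have ex : (G x).1 = (i - 1, a + b + 1 - j) := by
            rw [hG1, hx, FrG_high (Or.inl rfl) (by omega)]
            exact Prod.ext rfl (by simp; omega)
          have ey : (G y).1 = (i - 1 - 1, bandBeta n m' (i - 1 - 1) + 1 - j) := by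
            rw [hG1, hy, FrG_out (by omega)]
          refine (band_adj_right n m (i - 1) j hl1 hl2 hj1 (by rw [ha]; omega)
            (G x) (G y) ?_ ?_).reachable
          · rw [ex, hβim]
          · rw [ey, hβout _ (by omega)]
        · by_cases hl'' : l = i + 1
          · rw [hl''] at hl2 hj2 hx hy
            rw [hm'o _ (by omega), hc] at hj2
            rw [show i + 1 - 1 = i by omega, hβ'i] at hy
            have ex : (G x).1 = (i + 1, bandBeta n m' (i + 1) + 1 - j) := by
              rw [hG1, hx, FrG_out (by omega)]
            have ey : (G y).1 = (i, b + c + 1 - j) := by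
              rw [hG1, hy, FrG_high (Or.inr rfl) (by omega)]
              exact Prod.ext rfl (by simp; omega)
            refine (band_adj_right n m (i + 1) j (by omega) hl2 hj1
              (by rw [hc]; omega) (G x) (G y) ?_ ?_).reachable
            · rw [ex, hβout _ (by omega)]
            · rw [ey, show i + 1 - 1 = i by omega, hβi]
          · have hlx : ¬ (l = i - 1 ∨ l = i) := by omega
            have hly : ¬ (l - 1 = i - 1 ∨ l - 1 = i) := by omega
            have ex : (G x).1 = (l, bandBeta n m' l + 1 - j) := by
              rw [hG1, hx, FrG_out hlx]
            have ey : (G y).1 = (l - 1, bandBeta n m' (l - 1) + 1 - j) := by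
              rw [hG1, hy, FrG_out hly]
            refine (band_adj_right n m l j hl1 hl2 hj1
              (by rw [← hm'o l hl]; omega) (G x) (G y) ?_ ?_).reachable
            · rw [ex, hβout _ hlx]
            · rw [ey, hβout _ hly]
    intro x y hadj
    obtain ⟨l, j, hl1, hl2, hj1, hj2, hcase⟩ := band_adj_elim hadj
    rcases hcase with ⟨hx, hy⟩ | ⟨hy, hx⟩ | ⟨hx, hy⟩ | ⟨hy, hx⟩
    · exact key_left l j hl1 hl2 hj1 hj2 x y hx hy
    · exact (key_left l j hl1 hl2 hj1 hj2 y x hy hx).symm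
    · exact key_right l j hl1 hl2 hj1 hj2 x y hx hy
    · exact (key_right l j hl1 hl2 hj1 hj2 y x hy hx).symm
  exact card_cc_eq _ _ F G h1 h2 h3 h4

/-- If `m i > max (m (i-1)) (m (i+1))` (with the conventions `m 0 = m (n+1) = 0`), then
replacing `m i` by `m i - |m (i-1) - m (i+1)|` does not change the number of connected
components of the up-and-down graph of the band dimension vector. -/
theorem stmt5 (n : ℕ) (hn : 1 ≤ n) (m : ℕ → ℕ)
    (hpos : ∀ i, 1 ≤ i → i ≤ n → 0 < m i)
    (i : ℕ) (hi1 : 1 ≤ i) (hi2 : i ≤ n)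
    (hmax : max (bandM n m (i - 1)) (bandM n m (i + 1)) < m i) :
    NBand n m =
      NBand n (fun j =>
        if j = i then m i - Nat.dist (bandM n m (i - 1)) (bandM n m (i + 1)) else m j) := by
  have hbmi : bandM n m i = m i := by unfold bandM; rw [if_pos ⟨hi1, hi2⟩]
  rcases Nat.lt_trichotomy (bandM n m (i - 1)) (bandM n m (i + 1)) with h | h | h
  · -- a < c : use reversal
    set a := bandM n m (i - 1) with hadef
    set c := bandM n m (i + 1) with hcdef
    have hdist : Nat.dist a c = c - a := by unfold Nat.dist; omega
    set m₁ : ℕ → ℕ := fun j => m (n + 1 - j) with hm₁def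
    have hrev : ∀ x, bandM n m₁ x = bandM n m (n + 1 - x) := by
      intro x; unfold bandM
      by_cases hx : 1 ≤ x ∧ x ≤ n
      · rw [if_pos hx, if_pos (by omega)]
      · rw [if_neg hx, if_neg (by omega)]
    have hA2 : bandM n m₁ (n + 1 - i - 1) = c := by
      rw [hrev, hcdef]; congr 1; omega
    have hB2 : bandM n m₁ (n + 1 - i) = m i := by
      rw [hrev]; rw [hbmi.symm]; congr 1; omega
    have hC2 : bandM n m₁ (n + 1 - i + 1) = a := by
      rw [hrev, hadef]; congr 1; omega
    have hkey := caseA n m₁ (n + 1 - i) c (m i) a (c - a) (m i - Nat.dist a c)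
      (by omega) (by omega) hA2 hB2 hC2 h (by omega) rfl (by omega)
    rw [NBand_rev n m, hkey, NBand_rev n
      (fun j => if j = i then m i - Nat.dist a c else m j)]
    apply NBand_congr
    funext x
    unfold bandM
    by_cases hx : 1 ≤ x ∧ x ≤ n
    · rw [if_pos hx, if_pos hx]
      beta_reduce
      by_cases hxi : x = n + 1 - i
      · rw [if_pos (show n + 1 - x = i by omega), if_pos hxi]
      · rw [if_neg (show ¬ (n + 1 - x = i) by omega), if_neg hxi]
    · rw [if_neg hx, if_neg hx]
  · -- a = c : nothing changes
    have : (fun j => if j = i then m i - Nat.dist (bandM n m (i - 1)) (bandM n m (i + 1))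
        else m j) = m := by
      funext j
      by_cases hj : j = i
      · rw [if_pos hj, hj, h, Nat.dist_self, Nat.sub_zero]
      · rw [if_neg hj]
    rw [this]
  · -- c < a : direct
    have hdist : Nat.dist (bandM n m (i - 1)) (bandM n m (i + 1)) =
        bandM n m (i - 1) - bandM n m (i + 1) := by unfold Nat.dist; omega
    exact caseA n m i (bandM n m (i - 1)) (m i) (bandM n m (i + 1))
      (bandM n m (i - 1) - bandM n m (i + 1))
      (m i - Nat.dist (bandM n m (i - 1)) (bandM n m (i + 1)))
      hi1 hi2 rfl hbmi rfl h (by omega) rfl (by omega)
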